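/- arXiv:2307.11028 — 4 statements merged into one kernel-verified Lean document; each statement's English description precedes it below -/
import Mathlib

section
/- If z₁, z₂ lie in ℂ \ ℝ with Im z₁ and Im z₂ of opposite signs and η_* = min(|Im z₁|, |Im z₂|), then |m(z₁)m(z₂)/(1 - m(z₁)m(z₂))| ≤ C/η_* for an absolute constant C. -/
/-- `m` is the Stieltjes transform of the semicircle law: the (unique) solution
of `m(z)^2 + z·m(z) + 1 = 0` with `Im z · Im m(z) > 0` for all `z ∈ ℂ \ ℝ`. -/
def IsStieltjesSC (m : ℂ → ℂ) : Prop :=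
  ∀ z : ℂ, z.im ≠ 0 → m z ^ 2 + z * m z + 1 = 0 ∧ 0 < z.im * (m z).im

lemma key_sc_bound {w z : ℂ} (h1 : w ^ 2 + z * w + 1 = 0) (h2 : 0 < z.im * w.im) :
    ‖w‖ < 1 ∧ |z.im| * ‖w‖ ≤ 2 * (1 - ‖w‖) := by
  have hw : w ≠ 0 := by
    rintro rfl
    simp at h1
  have hb : w.im ≠ 0 := by
    rintro hbe
    rw [hbe, mul_zero] at h2
    exact lt_irrefl 0 h2
  have hz : z = -w - w⁻¹ := by
    field_simp
    linear_combination h1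
  have hs : 0 < Complex.normSq w := Complex.normSq_pos.2 hw
  have hzim : z.im = -w.im + w.im / Complex.normSq w := by
    rw [hz]
    simp [Complex.sub_im, Complex.neg_im, Complex.inv_im]
    ring
  set s := Complex.normSq w with hsdef
  set b := w.im with hbdef
  have hb2 : 0 < b ^ 2 := by positivity
  have heq : z.im * b * s = b ^ 2 * (1 - s) := by
    rw [hzim]
    field_simp
    ring
  have h3 : 0 < b ^ 2 * (1 - s) := heq ▸ mul_pos h2 hs
  have hslt : s < 1 := by nlinarith
  set r := ‖w‖ with hrdef
  have hrs : r ^ 2 = s := Complex.sq_norm w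
  have hr0 : 0 < r := norm_pos_iff.2 hw
  have hr1 : r < 1 := by nlinarith
  refine ⟨hr1, ?_⟩
  have habs : |b| ≤ r := Complex.abs_im_le_norm w
  have hbpos : 0 < |b| := abs_pos.2 hb
  have hbb : |b| * |b| = b ^ 2 := by rw [abs_mul_abs_self]; ring
  have hA : |z.im| * |b| * s = b ^ 2 * (1 - s) := by
    calc |z.im| * |b| * s = |z.im * b| * s := by rw [abs_mul]
      _ = (z.im * b) * s := by rw [abs_of_pos h2]
      _ = b ^ 2 * (1 - s) := heq
  have hAs : |z.im| * s = |b| * (1 - s) := by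
    have key : (|z.im| * s) * |b| = (|b| * (1 - s)) * |b| := by
      linear_combination hA - (1 - s) * hbb
    exact mul_right_cancel₀ (ne_of_gt hbpos) key
  have h1s : (0:ℝ) ≤ 1 - s := by linarith
  nlinarith [mul_le_mul_of_nonneg_right habs (mul_nonneg hr0.le h1s), hAs, hrs, hr0, hr1,
    mul_nonneg (abs_nonneg z.im) hr0.le, mul_pos hr0 hr0, sq_nonneg (r - 1)]

/-- If `Im z₁` and `Im z₂` have opposite signs and `η⋆ = min(|Im z₁|, |Im z₂|)`,
then `|m(z₁)m(z₂)/(1 - m(z₁)m(z₂))| ≤ C/η⋆` for an absolute constant `C`. -/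
theorem q_bound_opposite_signs :
    ∃ C : ℝ, 0 < C ∧ ∀ m : ℂ → ℂ, IsStieltjesSC m →
      ∀ z₁ z₂ : ℂ, z₁.im ≠ 0 → z₂.im ≠ 0 → z₁.im * z₂.im < 0 →
        ‖m z₁ * m z₂ / (1 - m z₁ * m z₂)‖ ≤
          C / min |z₁.im| |z₂.im| := by
  refine ⟨2, two_pos, ?_⟩
  intro m hm z₁ z₂ h1 h2 _
  obtain ⟨e1, p1⟩ := hm z₁ h1
  obtain ⟨e2, p2⟩ := hm z₂ h2
  obtain ⟨hr1, hk1⟩ := key_sc_bound e1 p1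
  obtain ⟨hr2, hk2⟩ := key_sc_bound e2 p2
  set r₁ := ‖m z₁‖ with hr₁def
  set r₂ := ‖m z₂‖ with hr₂def
  set η := min |z₁.im| |z₂.im| with hηdef
  have hη : 0 < η := lt_min (abs_pos.2 h1) (abs_pos.2 h2)
  have hr1p : 0 ≤ r₁ := norm_nonneg _
  have hr2p : 0 ≤ r₂ := norm_nonneg _
  have hden : 1 - r₁ * r₂ ≤ ‖1 - m z₁ * m z₂‖ := by
    have := norm_sub_norm_le (1 : ℂ) (m z₁ * m z₂)
    simpa [norm_mul] using this
  have hpos : (0:ℝ) < 1 - r₁ * r₂ := by nlinarith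
  rw [norm_div, norm_mul, div_le_div_iff₀ (lt_of_lt_of_le hpos hden) hη]
  have hmin : η ≤ |z₁.im| := min_le_left _ _
  have s1 : r₁ * r₂ * η ≤ r₁ * η := by
    nlinarith [mul_nonneg (mul_nonneg hr1p hη.le) (by linarith : (0:ℝ) ≤ 1 - r₂)]
  have s2 : r₁ * η ≤ r₁ * |z₁.im| := mul_le_mul_of_nonneg_left hmin hr1p
  have s3 : r₁ * |z₁.im| ≤ 2 * (1 - r₁) := by linarith [hk1, mul_comm r₁ |z₁.im|]
  have s4 : 2 * (1 - r₁) ≤ 2 * (1 - r₁ * r₂) := by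
    nlinarith [mul_nonneg hr1p (by linarith : (0:ℝ) ≤ 1 - r₂)]
  have s5 : 2 * (1 - r₁ * r₂) ≤ 2 * ‖1 - m z₁ * m z₂‖ := by linarith
  linarith
end

section
/- If z₁, z₂ ∈ ℂ \ ℝ have imaginary parts of the same sign, then |m(z₁)m(z₂)/(1 - m(z₁)m(z₂))| ≤ C / min(|Im m(z₁)|, |Im m(z₂)|) for an absolute constant C. -/
/-- From the self-consistent equation, the normSq of `m z` is `< 1`. -/
lemma normSq_lt_one_of_sc {z a : ℂ} (hz : z.im ≠ 0)
    (heq : a ^ 2 + z * a + 1 = 0) (hsg : 0 < z.im * a.im) :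
    Complex.normSq a < 1 := by
  have ha : a ≠ 0 := by rintro rfl; simp at heq
  have h1 : a * (Complex.normSq a : ℂ) + z * (Complex.normSq a : ℂ)
      + (starRingEnd ℂ) a = 0 := by
    rw [← Complex.mul_conj]
    linear_combination ((starRingEnd ℂ) a) * heq
  have him : a.im * Complex.normSq a + z.im * Complex.normSq a - a.im = 0 := by
    have := congrArg Complex.im h1
    simp [Complex.add_im, Complex.mul_im, Complex.conj_im] at this; linarith
  have key2 : z.im ^ 2 * Complex.normSq a = (z.im * a.im) * (1 - Complex.normSq a) := by
    linear_combination z.im * him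
  have hnsq : 0 < Complex.normSq a := Complex.normSq_pos.mpr ha
  have hz2 : 0 < z.im ^ 2 := by positivity
  nlinarith [mul_pos hz2 hnsq, mul_pos hsg hnsq]

lemma real_core (x u y v : ℝ) (hx : 0 < x) (hy : 0 < y) (hu : 0 < u)
    (hu1 : u ≤ 1) (hv1 : v ≤ 1) (huv : 1 / 2 < u * v) :
    x / 2 + y / 2 ≤ u * y + x * v := by
  have hv : 0 < v := by nlinarith
  have hu2 : 1 / 2 < u := by nlinarith
  have hv2 : 1 / 2 < v := by nlinarith
  nlinarith

set_option maxHeartbeats 1000000 in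
lemma one_sub_mul_lower {a b : ℂ} (ha : ‖a‖ < 1) (hb : ‖b‖ < 1)
    (hs : 0 < a.im * b.im) :
    min |a.im| |b.im| / 2 ≤ ‖1 - a * b‖ := by
  have hra := abs_le.mp (le_trans (Complex.abs_re_le_norm a) ha.le)
  have hrb := abs_le.mp (le_trans (Complex.abs_re_le_norm b) hb.le)
  have hia : |a.im| ≤ 1 := le_trans (Complex.abs_im_le_norm a) ha.le
  have hib : |b.im| ≤ 1 := le_trans (Complex.abs_im_le_norm b) hb.le
  have hmin : min |a.im| |b.im| ≤ 1 := le_trans (min_le_left _ _) hia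
  have hμa : min |a.im| |b.im| ≤ |a.im| := min_le_left _ _
  have hμb : min |a.im| |b.im| ≤ |b.im| := min_le_right _ _
  rcases le_or_gt ((a * b).re) (1 / 2) with hre | hre
  · refine le_trans ?_ (Complex.abs_re_le_norm (1 - a * b))
    have h0 : (1 - a * b).re = 1 - (a * b).re := by simp
    rw [h0]
    calc min |a.im| |b.im| / 2 ≤ 1 / 2 := by linarith
      _ ≤ |1 - (a * b).re| := le_trans (by linarith) (le_abs_self _)
  · refine le_trans ?_ (Complex.abs_im_le_norm (1 - a * b))
    have h0 : (1 - a * b).im = -((a * b).im) := by simp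
    rw [h0, abs_neg]
    have hre' : 1 / 2 < a.re * b.re - a.im * b.im := by
      have h := Complex.mul_re a b; linarith [h ▸ hre]
    have hrr : 1 / 2 < a.re * b.re := by nlinarith
    have him : (a * b).im = a.re * b.im + a.im * b.re := Complex.mul_im a b
    rw [him]
    rcases lt_or_gt_of_ne (fun h : a.im = 0 => by simp [h] at hs) with hai | hai
    · have hbi : b.im < 0 := by nlinarith
      rcases lt_or_gt_of_ne (fun h : a.re = 0 => by simp [h] at hrr; linarith) with har | har
      · have hbr : b.re < 0 := by nlinarith
        have hc := real_core (-a.im) (-a.re) (-b.im) (-b.re)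
          (by linarith) (by linarith) (by linarith)
          (by linarith [hra.1]) (by linarith [hrb.1]) (by nlinarith)
        have hpos : 0 ≤ a.re * b.im + a.im * b.re := by linarith [hc]
        rw [abs_of_nonneg hpos]
        have habs : |a.im| = -a.im := abs_of_neg hai
        linarith [hμa.trans_eq habs, hc]
      · have hbr : 0 < b.re := by nlinarith
        have hc := real_core (-a.im) a.re (-b.im) b.re
          (by linarith) (by linarith) har (by linarith [hra.2]) (by linarith [hrb.2]) hrr
        have hneg : a.re * b.im + a.im * b.re ≤ 0 := by linarith [hc]
        rw [abs_of_nonpos hneg]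
        have habs : |a.im| = -a.im := abs_of_neg hai
        linarith [hμa.trans_eq habs, hc]
    · have hbi : 0 < b.im := by nlinarith
      rcases lt_or_gt_of_ne (fun h : a.re = 0 => by simp [h] at hrr; linarith) with har | har
      · have hbr : b.re < 0 := by nlinarith
        have hc := real_core a.im (-a.re) b.im (-b.re)
          hai hbi (by linarith) (by linarith [hra.1]) (by linarith [hrb.1]) (by nlinarith)
        have hneg : a.re * b.im + a.im * b.re ≤ 0 := by linarith [hc]
        rw [abs_of_nonpos hneg]
        have habs : |a.im| = a.im := abs_of_pos hai
        linarith [hμa.trans_eq habs, hc]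
      · have hbr : 0 < b.re := by nlinarith
        have hc := real_core a.im a.re b.im b.re
          hai hbi har (by linarith [hra.2]) (by linarith [hrb.2]) hrr
        have hpos : 0 ≤ a.re * b.im + a.im * b.re := by linarith [hc]
        rw [abs_of_nonneg hpos]
        have habs : |a.im| = a.im := abs_of_pos hai
        linarith [hμa.trans_eq habs, hc]

/-- If `Im z₁` and `Im z₂` have the same sign, then
`|m(z₁)m(z₂)/(1 - m(z₁)m(z₂))| ≤ C / min(|Im m(z₁)|, |Im m(z₂)|)`
for an absolute constant `C`. -/
theorem q_bound_same_sign :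
    ∃ C : ℝ, 0 < C ∧ ∀ m : ℂ → ℂ, IsStieltjesSC m →
      ∀ z₁ z₂ : ℂ, z₁.im ≠ 0 → z₂.im ≠ 0 → 0 < z₁.im * z₂.im →
        ‖m z₁ * m z₂ / (1 - m z₁ * m z₂)‖ ≤
          C / min |(m z₁).im| |(m z₂).im| := by
  refine ⟨2, by norm_num, fun m hm z₁ z₂ hz₁ hz₂ hzz => ?_⟩
  obtain ⟨heq₁, hsg₁⟩ := hm z₁ hz₁
  obtain ⟨heq₂, hsg₂⟩ := hm z₂ hz₂
  set a := m z₁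
  set b := m z₂
  have ha : ‖a‖ < 1 := by
    have := normSq_lt_one_of_sc hz₁ heq₁ hsg₁
    rw [← Complex.sq_norm] at this
    nlinarith [norm_nonneg a]
  have hb : ‖b‖ < 1 := by
    have := normSq_lt_one_of_sc hz₂ heq₂ hsg₂
    rw [← Complex.sq_norm] at this
    nlinarith [norm_nonneg b]
  have hs : 0 < a.im * b.im := by
    nlinarith [mul_pos hsg₁ hsg₂, mul_pos hzz hzz]
  have hμpos : 0 < min |a.im| |b.im| :=
    lt_min (abs_pos.mpr fun h => by simp [h] at hs)
      (abs_pos.mpr fun h => by simp [h] at hs)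
  have hlow := one_sub_mul_lower ha hb hs
  have hden : (0:ℝ) < ‖1 - a * b‖ := lt_of_lt_of_le (by positivity) hlow
  rw [norm_div, norm_mul]
  have hnum : ‖a‖ * ‖b‖ ≤ 1 := by
    nlinarith [norm_nonneg a, norm_nonneg b]
  calc ‖a‖ * ‖b‖ / ‖1 - a * b‖
      ≤ 1 / (min |a.im| |b.im| / 2) :=
        div_le_div₀ (by norm_num) hnum (by positivity) hlow
    _ = 2 / min |a.im| |b.im| := by field_simp
end

section
/- For any z ∈ ℂ \ ℝ, the Stieltjes transform of the semicircle law satisfies |m(z)| < 1. -/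
/-- For any `z ∈ ℂ \ ℝ`, the Stieltjes transform of the semicircle law
satisfies `|m(z)| < 1`. -/
theorem mSC_abs_lt_one (m : ℂ → ℂ) (hm : IsStieltjesSC m)
    (z : ℂ) (hz : z.im ≠ 0) : ‖m z‖ < 1 := by
  obtain ⟨heq, hpos⟩ := hm z hz
  set w := m z with hw
  have hw0 : w ≠ 0 := by
    intro h
    rw [h] at heq
    simp at heq
  have hzval : z = -w - w⁻¹ := by
    field_simp
    linear_combination heq
  have hn : 0 < Complex.normSq w := Complex.normSq_pos.mpr hw0
  have him : z.im = -w.im + w.im / Complex.normSq w := by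
    rw [hzval]
    simp [Complex.sub_im, Complex.neg_im, Complex.inv_im, neg_div]
  rw [him] at hpos
  have key : 0 < w.im ^ 2 * (1 - Complex.normSq w) := by
    have h1 := mul_pos hn hpos
    have hd : Complex.normSq w * ((-w.im + w.im / Complex.normSq w) * w.im)
        = w.im ^ 2 * (1 - Complex.normSq w) := by
      field_simp
      ring
    linarith [hd ▸ h1]
  have hns : Complex.normSq w < 1 := by nlinarith [sq_nonneg w.im]
  nlinarith [Complex.sq_norm w, norm_nonneg w]
end

section
/- The integral of the plane-wave test function against the semicircle density satisfies ∫_{-2}^{2} e^{itx} ρ_sc(x) dx = J₁(2t)/t for all real t ≠ 0, where J₁ is the Bessel function of the first kind of order 1. -/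
open Real intervalIntegral MeasureTheory

/-- Wallis: S k = ∫_{-π/2}^{π/2} sin^{2k} = π (2k)! / (4^k (k!)^2) -/
lemma wallis_even (k : ℕ) :
    (∫ x in (-(π/2))..(π/2), Real.sin x ^ (2*k)) =
      π * (Nat.factorial (2*k)) / ((4:ℝ)^k * (Nat.factorial k)^2) := by
  induction k with
  | zero => simp
  | succ k ih =>
    have h := integral_sin_pow (a := -(π/2)) (b := π/2) (2*k)
    have h2 : 2 * (k+1) = 2*k + 2 := by ring
    rw [h2, h, ih]
    rw [Real.cos_pi_div_two, Real.cos_neg, Real.cos_pi_div_two]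
    have hk4 : ((4:ℝ)^k) ≠ 0 := by positivity
    have hkf : ((Nat.factorial k : ℝ)) ≠ 0 := Nat.cast_ne_zero.mpr (Nat.factorial_ne_zero k)
    have e1 : (Nat.factorial (2*k+2) : ℝ) = (2*k+2) * (2*k+1) * Nat.factorial (2*k) := by
      have : 2*k+2 = (2*k+1) + 1 := by ring
      rw [this, Nat.factorial_succ, Nat.factorial_succ]; push_cast; ring
    have e2 : (Nat.factorial (k+1) : ℝ) = (k+1) * Nat.factorial k := by
      rw [Nat.factorial_succ]; push_cast; ring
    rw [e1, e2]
    have h2k2 : ((2:ℝ)*k+2) ≠ 0 := by positivity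
    field_simp
    push_cast
    ring


/-- Even moments of the semicircle (unnormalized). -/
lemma moment_even (k : ℕ) :
    (∫ x in (-2:ℝ)..2, x ^ (2*k) * Real.sqrt (4 - x^2)) =
      2 * π * (Nat.factorial (2*k)) / ((Nat.factorial k) * (Nat.factorial (k+1))) := by
  have hg : Continuous (fun x : ℝ => x ^ (2*k) * Real.sqrt (4 - x^2)) := by
    fun_prop
  have hf : ∀ x ∈ Set.uIcc (-(π/2)) (π/2),
      HasDerivAt (fun θ : ℝ => 2 * Real.sin θ) (2 * Real.cos x) x :=
    fun x _ => (Real.hasDerivAt_sin x).const_mul 2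
  have hf' : ContinuousOn (fun x : ℝ => 2 * Real.cos x) (Set.uIcc (-(π/2)) (π/2)) := by
    fun_prop
  have hsub := intervalIntegral.integral_comp_mul_deriv hf hf' hg
  have hends : (2 : ℝ) * Real.sin (-(π/2)) = -2 ∧ (2:ℝ) * Real.sin (π/2) = 2 := by
    simp [Real.sin_pi_div_two]
  rw [hends.1, hends.2] at hsub
  simp only [Function.comp] at hsub
  -- simplify the LHS integrand on the interval
  have key : ∀ θ ∈ Set.uIcc (-(π/2)) (π/2),
      (fun θ : ℝ => (2 * Real.sin θ) ^ (2*k) * Real.sqrt (4 - (2*Real.sin θ)^2) * (2 * Real.cos θ)) θ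
        = (fun θ : ℝ => (4:ℝ)^(k+1) * (Real.sin θ ^ (2*k) - Real.sin θ ^ (2*k+2))) θ := by
    intro θ hθ
    simp only []
    have hθ' : θ ∈ Set.Icc (-(π/2)) (π/2) := by
      rwa [Set.uIcc_of_le (by linarith [Real.pi_pos])] at hθ
    have hcos : 0 ≤ Real.cos θ := Real.cos_nonneg_of_mem_Icc hθ'
    have h4 : 4 - (2*Real.sin θ)^2 = (2 * Real.cos θ)^2 := by
      have := Real.sin_sq_add_cos_sq θ
      nlinarith
    rw [h4, Real.sqrt_sq (by positivity)]
    have hc2 : Real.cos θ ^ 2 = 1 - Real.sin θ ^ 2 := Real.cos_sq' θ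
    simp only [mul_pow]
    have e4 : (4:ℝ)^(k+1) = 4 * 2^(2*k) := by
      rw [pow_succ, show (4:ℝ) = 2^2 by norm_num, ← pow_mul]; ring
    rw [e4]
    linear_combination (4 * 2^(2*k) * Real.sin θ ^ (2*k)) * hc2
  rw [intervalIntegral.integral_congr key] at hsub
  rw [intervalIntegral.integral_const_mul] at hsub
  have hint : ∀ n : ℕ, IntervalIntegrable (fun θ : ℝ => Real.sin θ ^ n) MeasureTheory.volume (-(π/2)) (π/2) :=
    fun n => (Real.continuous_sin.pow n).intervalIntegrable _ _
  rw [intervalIntegral.integral_sub (hint (2*k)) (hint (2*k+2))] at hsub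
  have hS := wallis_even k
  have hS' : (∫ x in (-(π/2))..(π/2), Real.sin x ^ (2*k+2))
      = (2*(k:ℝ)+1)/(2*k+2) * ∫ x in (-(π/2))..(π/2), Real.sin x ^ (2*k) := by
    have h := integral_sin_pow (a := -(π/2)) (b := π/2) (2*k)
    rw [Real.cos_pi_div_two, Real.cos_neg, Real.cos_pi_div_two] at h
    rw [h]; push_cast; ring
  rw [hS', hS] at hsub
  rw [← hsub]
  have hk4 : ((4:ℝ)^k) ≠ 0 := by positivity
  have hkf : ((Nat.factorial k : ℝ)) ≠ 0 := Nat.cast_ne_zero.mpr (Nat.factorial_ne_zero k)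
  have e2 : (Nat.factorial (k+1) : ℝ) = (k+1) * Nat.factorial k := by
    rw [Nat.factorial_succ]; push_cast; ring
  rw [e2, pow_succ]
  have h2k2 : ((2:ℝ)*k+2) ≠ 0 := by positivity
  field_simp
  ring

lemma moment_odd (n : ℕ) :
    (∫ x in (-2:ℝ)..2, x ^ (2*n+1) * Real.sqrt (4 - x^2)) = 0 := by
  set f : ℝ → ℝ := fun x => x ^ (2*n+1) * Real.sqrt (4 - x^2) with hfdef
  have hc : Continuous f := by fun_prop
  have hodd : ∀ x, f (-x) = - f x := by
    intro x
    simp only [hfdef]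
    rw [Odd.neg_pow ⟨n, by ring⟩, neg_sq]
    ring
  have h1 : (∫ x in (0:ℝ)..2, f (-x)) = ∫ x in (-2:ℝ)..(-0:ℝ), f x :=
    intervalIntegral.integral_comp_neg (a := 0) (b := 2) (f := f)
  rw [neg_zero] at h1
  have h2 : (∫ x in (0:ℝ)..2, f (-x)) = - ∫ x in (0:ℝ)..2, f x := by
    simp only [hodd, intervalIntegral.integral_neg]
  have hadd : (∫ x in (-2:ℝ)..0, f x) + (∫ x in (0:ℝ)..2, f x) = ∫ x in (-2:ℝ)..2, f x :=
    intervalIntegral.integral_add_adjacent_intervals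
      (hc.intervalIntegrable _ _) (hc.intervalIntegrable _ _)
  rw [← hadd, ← h1, h2]
  ring

/-- The semicircle density `ρ_sc(x) = √(4-x²)/(2π)` on `[-2,2]`. -/
noncomputable def rhoSC (x : ℝ) : ℝ := Real.sqrt (4 - x ^ 2) / (2 * Real.pi)

/-- The Bessel function of the first kind of order 1,
`J₁(z) = (z/2) ∑_{k≥0} (-1)^k (z²/4)^k / (k!(k+1)!)`. -/
noncomputable def besselJ1 (x : ℝ) : ℝ :=
  (x / 2) * ∑' k : ℕ,
    (-1 : ℝ) ^ k * (x ^ 2 / 4) ^ k / ((Nat.factorial k : ℝ) * (Nat.factorial (k + 1) : ℝ))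

lemma rho_moment_even (k : ℕ) :
    (∫ x in (-2:ℝ)..2, x ^ (2*k) * rhoSC x) =
      (Nat.factorial (2*k)) / ((Nat.factorial k) * (Nat.factorial (k+1))) := by
  have : ∀ x : ℝ, x ^ (2*k) * rhoSC x = (x ^ (2*k) * Real.sqrt (4 - x^2)) * (1/(2*π)) := by
    intro x; unfold rhoSC; ring
  simp only [this]
  rw [intervalIntegral.integral_mul_const, moment_even k]
  have hπ : π ≠ 0 := Real.pi_ne_zero
  field_simp

lemma rho_moment_odd (n : ℕ) :
    (∫ x in (-2:ℝ)..2, x ^ (2*n+1) * rhoSC x) = 0 := by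
  have : ∀ x : ℝ, x ^ (2*n+1) * rhoSC x = (x ^ (2*n+1) * Real.sqrt (4 - x^2)) * (1/(2*π)) := by
    intro x; unfold rhoSC; ring
  simp only [this]
  rw [intervalIntegral.integral_mul_const, moment_odd n]
  simp


/-- `∫_{-2}^{2} e^{itx} ρ_sc(x) dx = J₁(2t)/t` for all real `t ≠ 0`. -/
theorem semicircle_fourier_bessel (t : ℝ) (ht : t ≠ 0) :
    (∫ x in (-2 : ℝ)..2, Complex.exp (Complex.I * t * x) * (rhoSC x : ℂ)) =
      ((besselJ1 (2 * t) / t : ℝ) : ℂ) := by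
  have hρc : Continuous rhoSC := by unfold rhoSC; fun_prop
  set F : ℕ → ℝ → ℂ := fun n x => (Complex.I * t * x) ^ n / (Nat.factorial n) * (rhoSC x : ℂ)
    with hF
  have hρ_bound : ∀ x : ℝ, |rhoSC x| ≤ 1/π := by
    intro x
    have h0 : 0 ≤ rhoSC x := by unfold rhoSC; positivity
    rw [abs_of_nonneg h0]
    unfold rhoSC
    rw [div_le_div_iff₀ (by positivity) Real.pi_pos]
    have hs : Real.sqrt (4 - x^2) ≤ 2 := by
      rw [show (2:ℝ) = Real.sqrt 4 by rw [show (4:ℝ) = 2^2 by norm_num, Real.sqrt_sq]; norm_num]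
      exact Real.sqrt_le_sqrt (by nlinarith [sq_nonneg x])
    nlinarith [Real.pi_pos]
  have hDCT : HasSum (fun n => ∫ x in (-2:ℝ)..2, F n x)
      (∫ x in (-2:ℝ)..2, Complex.exp (Complex.I * t * x) * (rhoSC x : ℂ)) := by
    apply intervalIntegral.hasSum_integral_of_dominated_convergence
      (bound := fun n _ => (2 * |t|) ^ n / (Nat.factorial n) * (1/π))
    · intro n
      apply Continuous.aestronglyMeasurable
      fun_prop
    · intro n
      filter_upwards with x hx
      have hx2 : |x| ≤ 2 := by
        rw [Set.uIoc_of_le (by norm_num : (-2:ℝ) ≤ 2)] at hx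
        rw [abs_le]; exact ⟨hx.1.le, hx.2⟩
      have hz : ‖(Complex.I * t * x : ℂ)‖ = |t| * |x| := by
        simp [Complex.norm_real, Real.norm_eq_abs]
      have hnorm : ‖F n x‖ = (|t| * |x|) ^ n / (Nat.factorial n) * |rhoSC x| := by
        rw [hF]
        rw [norm_mul, norm_div, norm_pow, hz, Complex.norm_real, Real.norm_eq_abs,
          Complex.norm_natCast]
      rw [hnorm]
      have h1 : |t| * |x| ≤ 2 * |t| := by nlinarith [abs_nonneg t]
      have h2 := hρ_bound x
      apply mul_le_mul _ h2 (abs_nonneg _) (by positivity)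
      gcongr
    · filter_upwards with x _
      exact (Real.summable_pow_div_factorial (2 * |t|)).mul_right _
    · exact continuous_const.intervalIntegrable _ _
    · filter_upwards with x _
      have h := NormedSpace.expSeries_div_hasSum_exp (Complex.I * t * x)
      rw [← Complex.exp_eq_exp_ℂ] at h
      exact h.mul_right _
  set c : ℕ → ℂ := fun n =>
    (Complex.I * t) ^ n / (Nat.factorial n) * ((∫ x in (-2:ℝ)..2, x ^ n * rhoSC x : ℝ) : ℂ)
    with hc
  have hm : ∀ n : ℕ, (∫ x in (-2:ℝ)..2, F n x) = c n := by
    intro n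
    simp only [hF, hc]
    have key : ∀ x : ℝ, (Complex.I * t * x) ^ n / (Nat.factorial n) * (rhoSC x : ℂ)
        = ((Complex.I * t) ^ n / (Nat.factorial n)) * (((x ^ n * rhoSC x : ℝ) : ℂ)) := by
      intro x; push_cast; rw [mul_pow]; ring
    simp only [key]
    rw [intervalIntegral.integral_const_mul, intervalIntegral.integral_ofReal]
  rw [funext hm] at hDCT
  have hinj : Function.Injective (fun k : ℕ => 2 * k) := fun a b h => by
    simp only [] at h; omega
  have hzero : ∀ n, n ∉ Set.range (fun k : ℕ => 2 * k) → c n = 0 := by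
    intro n hn
    have hodd : Odd n := by
      rcases Nat.even_or_odd n with he | ho
      · obtain ⟨r, rfl⟩ := he
        exact absurd ⟨r, by show 2 * r = r + r; ring⟩ hn
      · exact ho
    obtain ⟨m, rfl⟩ := hodd
    simp only [hc, rho_moment_odd m]
    simp
  have hck : ∀ k : ℕ, c (2 * k) =
      (((-1:ℝ) ^ k * t ^ (2*k) / ((Nat.factorial k) * (Nat.factorial (k+1))) : ℝ) : ℂ) := by
    intro k
    simp only [hc, rho_moment_even k]
    have hI : (Complex.I * t) ^ (2*k) = (((-1:ℝ) ^ k * t ^ (2*k) : ℝ) : ℂ) := by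
      rw [pow_mul]
      have h2 : (Complex.I * (t:ℂ)) ^ 2 = ((-(t^2) : ℝ) : ℂ) := by
        push_cast
        rw [mul_pow, Complex.I_sq]; ring
      rw [h2]
      push_cast
      rw [neg_pow, pow_mul]
    rw [hI]
    have hfk : ((Nat.factorial (2*k) : ℂ)) ≠ 0 := Nat.cast_ne_zero.mpr (Nat.factorial_ne_zero _)
    have hfk1 : ((Nat.factorial k : ℂ)) ≠ 0 := Nat.cast_ne_zero.mpr (Nat.factorial_ne_zero _)
    have hfk2 : ((Nat.factorial (k+1) : ℂ)) ≠ 0 := Nat.cast_ne_zero.mpr (Nat.factorial_ne_zero _)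
    push_cast
    field_simp
  have hsum2 : HasSum (fun k => c (2 * k)) ((besselJ1 (2 * t) / t : ℝ) : ℂ) := by
    simp only [hck]
    rw [Complex.hasSum_ofReal]
    have hsummable : Summable (fun k : ℕ =>
        (-1:ℝ) ^ k * ((2*t)^2/4) ^ k / ((Nat.factorial k : ℝ) * (Nat.factorial (k+1) : ℝ))) := by
      apply Summable.of_norm_bounded (Real.summable_pow_div_factorial (t^2))
      intro k
      rw [Real.norm_eq_abs, abs_div, abs_mul, abs_pow, abs_pow, abs_neg, abs_one, one_pow, one_mul]
      have h4 : |(2*t)^2/4| = t^2 := by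
        rw [abs_of_nonneg (by positivity)]; ring
      rw [h4, abs_of_nonneg (by positivity : (0:ℝ) ≤ (Nat.factorial k : ℝ) * (Nat.factorial (k+1) : ℝ))]
      apply div_le_div_of_nonneg_left (by positivity) (by positivity)
      exact le_mul_of_one_le_right (by positivity)
        (by exact_mod_cast Nat.one_le_iff_ne_zero.mpr (Nat.factorial_ne_zero _))
    have hT := hsummable.hasSum
    have hb : besselJ1 (2 * t) / t = ∑' k : ℕ,
        (-1:ℝ) ^ k * ((2*t)^2/4) ^ k / ((Nat.factorial k : ℝ) * (Nat.factorial (k+1) : ℝ)) := by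
      unfold besselJ1
      field_simp
    rw [hb]
    have heq : (fun k : ℕ => (-1:ℝ) ^ k * t ^ (2*k) / ((Nat.factorial k : ℝ) * (Nat.factorial (k+1) : ℝ)))
        = fun k : ℕ => (-1:ℝ) ^ k * ((2*t)^2/4) ^ k / ((Nat.factorial k : ℝ) * (Nat.factorial (k+1) : ℝ)) := by
      funext k
      rw [pow_mul, show ((2*t)^2/4 : ℝ) = t^2 by ring]
    rw [heq]
    exact hT
  have hfinal : HasSum c ((besselJ1 (2 * t) / t : ℝ) : ℂ) :=
    (hinj.hasSum_iff hzero).mp hsum2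
  exact hDCT.unique hfinal
end
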